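/- Let G be an edge-colored graph on n ≥ 13 vertices with δ^c(G) ≥ (n+1)/2. Then G contains two rainbow triangles sharing exactly one common vertex, i.e., there exist a vertex v and four distinct vertices x₁, y₁, x₂, y₂, all adjacent to v, with x₁y₁ and x₂y₂ edges of G, such that both triangles v x₁ y₁ and v x₂ y₂ are rainbow. -/

import Mathlib

/-- The triangle on vertices `u`, `v`, `w` exists in `G` and is rainbow under the
edge-coloring `c`, i.e. its three edges receive pairwise distinct colors. -/
def IsRainbowTri {V : Type*} (G : SimpleGraph V) (c : Sym2 V → ℕ) (u v w : V) : Prop :=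
  G.Adj u v ∧ G.Adj u w ∧ G.Adj v w ∧
    c s(u, v) ≠ c s(u, w) ∧ c s(u, v) ≠ c s(v, w) ∧ c s(u, w) ≠ c s(v, w)

/-- The color degree of `v`: the number of distinct colors on edges incident with `v`. -/
noncomputable def colorDeg {V : Type*} (G : SimpleGraph V) (c : Sym2 V → ℕ) (v : V) : ℕ :=
  Set.ncard {β : ℕ | ∃ u, G.Adj v u ∧ c s(v, u) = β}

open Finset
set_option linter.unusedSectionVars false

namespace RainbowAux

variable {V : Type*} [Fintype V] [DecidableEq V] (G : SimpleGraph V) [DecidableRel G.Adj]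
  (c : Sym2 V → ℕ)

def pairsE (v : V) : Finset (V × V) :=
  (G.neighborFinset v).offDiag.filter fun p => c s(v, p.1) = c s(v, p.2)

def pairsD (v : V) : Finset (V × V) :=
  ((G.neighborFinset v) ×ˢ (G.neighborFinset v)).filter fun p => c s(v, p.1) ≠ c s(v, p.2)

def rtp (v : V) : Finset (V × V) :=
  (pairsD G c v).filter fun p =>
    G.Adj p.1 p.2 ∧ c s(v, p.1) ≠ c s(p.1, p.2) ∧ c s(v, p.2) ≠ c s(p.1, p.2)

def b1 (v : V) : Finset (V × V) := (pairsD G c v).filter fun p => ¬ G.Adj p.1 p.2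

def b3 (v : V) : Finset (V × V) :=
  (pairsD G c v).filter fun p => G.Adj p.1 p.2 ∧ c s(p.1, p.2) = c s(v, p.1)

def b3' (v : V) : Finset (V × V) :=
  (pairsD G c v).filter fun p => G.Adj p.1 p.2 ∧ c s(p.1, p.2) = c s(v, p.2)

lemma rtp_iff (v : V) (p : V × V) : p ∈ rtp G c v ↔ IsRainbowTri G c v p.1 p.2 := by
  simp only [rtp, pairsD, mem_filter, mem_product, SimpleGraph.mem_neighborFinset,
    IsRainbowTri]
  tauto

lemma cover (v : V) :
    (pairsD G c v).card ≤ (rtp G c v).card + (b1 G c v).card + (b3 G c v).card + (b3' G c v).card := by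
  have hsub : pairsD G c v ⊆ rtp G c v ∪ b1 G c v ∪ b3 G c v ∪ b3' G c v := by
    intro p hp
    simp only [mem_union, rtp, b1, b3, b3', mem_filter]
    by_cases h1 : G.Adj p.1 p.2
    · by_cases h2 : c s(p.1, p.2) = c s(v, p.1)
      · exact Or.inl (Or.inr ⟨hp, h1, h2⟩)
      · by_cases h3 : c s(p.1, p.2) = c s(v, p.2)
        · exact Or.inr ⟨hp, h1, h3⟩
        · exact Or.inl (Or.inl (Or.inl ⟨hp, h1, Ne.symm h2, Ne.symm h3⟩))
    · exact Or.inl (Or.inl (Or.inr ⟨hp, h1⟩))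
  calc (pairsD G c v).card ≤ (rtp G c v ∪ b1 G c v ∪ b3 G c v ∪ b3' G c v).card :=
        card_le_card hsub
    _ ≤ (rtp G c v ∪ b1 G c v ∪ b3 G c v).card + (b3' G c v).card := card_union_le _ _
    _ ≤ (rtp G c v ∪ b1 G c v).card + (b3 G c v).card + (b3' G c v).card := by
        have := card_union_le (rtp G c v ∪ b1 G c v) (b3 G c v); omega
    _ ≤ (rtp G c v).card + (b1 G c v).card + (b3 G c v).card + (b3' G c v).card := by
        have := card_union_le (rtp G c v) (b1 G c v); omega

lemma b3'_eq (v : V) : (b3' G c v).card = (b3 G c v).card := by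
  apply Finset.card_bij (fun p _ => Prod.swap p)
  · intro p hp
    simp only [b3, b3', pairsD, mem_filter, mem_product, Prod.fst_swap, Prod.snd_swap] at hp ⊢
    obtain ⟨⟨⟨m1, m2⟩, hne⟩, hadj, hc⟩ := hp
    refine ⟨⟨⟨m2, m1⟩, hne.symm⟩, hadj.symm, ?_⟩
    rw [Sym2.eq_swap]; exact hc
  · intro p _ q _ h
    exact Prod.swap_injective h
  · intro p hp
    refine ⟨Prod.swap p, ?_, (Prod.swap_swap p).symm⟩
    simp only [b3, b3', pairsD, mem_filter, mem_product, Prod.fst_swap, Prod.snd_swap] at hp ⊢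
    obtain ⟨⟨⟨m1, m2⟩, hne⟩, hadj, hc⟩ := hp
    refine ⟨⟨⟨m2, m1⟩, hne.symm⟩, hadj.symm, ?_⟩
    rw [Sym2.eq_swap]; exact hc

lemma square_le (v : V) :
    G.degree v * G.degree v ≤ G.degree v + (pairsE G c v).card + (pairsD G c v).card := by
  set N := G.neighborFinset v
  have hcard : (N ×ˢ N).card = G.degree v * G.degree v := by
    rw [card_product]; rfl
  have hsplit : ((N ×ˢ N).filter fun p => c s(v, p.1) = c s(v, p.2)).card
      + ((N ×ˢ N).filter fun p => ¬ (c s(v, p.1) = c s(v, p.2))).card = (N ×ˢ N).card :=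
    card_filter_add_card_filter_not _
  have hD : ((N ×ˢ N).filter fun p => ¬ (c s(v, p.1) = c s(v, p.2))) = pairsD G c v := rfl
  -- split the equal-color part by diagonal
  set Peq := (N ×ˢ N).filter fun p => c s(v, p.1) = c s(v, p.2) with hPeq
  have hsplit2 : (Peq.filter fun p => p.1 = p.2).card
      + (Peq.filter fun p => ¬ (p.1 = p.2)).card = Peq.card :=
    card_filter_add_card_filter_not _
  have hdiag : (Peq.filter fun p => p.1 = p.2).card ≤ G.degree v := by
    have : (Peq.filter fun p => p.1 = p.2) ⊆ N.image (fun u => (u, u)) := by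
      intro p hp
      simp only [hPeq, mem_filter, mem_product, mem_image] at hp ⊢
      obtain ⟨⟨⟨h1, _⟩, _⟩, he⟩ := hp
      exact ⟨p.1, h1, by cases p; cases he; rfl⟩
    calc (Peq.filter fun p => p.1 = p.2).card ≤ (N.image fun u => (u, u)).card :=
          card_le_card this
      _ ≤ N.card := card_image_le
  have hoff : (Peq.filter fun p => ¬ (p.1 = p.2)) = pairsE G c v := by
    ext p
    simp only [hPeq, pairsE, mem_filter, mem_product, mem_offDiag]
    tauto
  have hle : Peq.card ≤ G.degree v + (pairsE G c v).card := by
    rw [← hsplit2, hoff]; omega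
  rw [hD, hcard] at hsplit
  omega

lemma colorDeg_eq (v : V) :
    colorDeg G c v = ((G.neighborFinset v).image fun u => c s(v, u)).card := by
  have : {β : ℕ | ∃ u, G.Adj v u ∧ c s(v, u) = β}
      = ↑((G.neighborFinset v).image fun u => c s(v, u)) := by
    ext β
    simp [SimpleGraph.mem_neighborFinset]
  rw [colorDeg, this, Set.ncard_coe_finset]

lemma pairsE_le (v : V) :
    (pairsE G c v).card ≤ (G.degree v - colorDeg G c v) * (G.degree v - colorDeg G c v + 1) := by
  classical
  set N := G.neighborFinset v with hN
  set K := N.image (fun u => c s(v, u)) with hK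
  -- fiber of a color
  set fib : ℕ → Finset V := fun b => N.filter (fun u => c s(v, u) = b) with hfib
  have hfibcard : ∀ u ∈ pairsE G c v, (fun p : V × V => c s(v, p.1)) u ∈ K := by
    intro p hp
    simp only [pairsE, mem_filter, mem_offDiag] at hp
    exact mem_image_of_mem _ hp.1.1
  have hdecomp : (pairsE G c v).card
      = ∑ b ∈ K, ((pairsE G c v).filter fun p => c s(v, p.1) = b).card :=
    card_eq_sum_card_fiberwise hfibcard
  have hfiber_eq : ∀ b ∈ K, ((pairsE G c v).filter fun p => c s(v, p.1) = b) = (fib b).offDiag := by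
    intro b _
    ext p
    simp only [pairsE, hfib, mem_filter, mem_offDiag]
    constructor
    · rintro ⟨⟨⟨h1, h2, h3⟩, h4⟩, h5⟩
      exact ⟨⟨h1, h5⟩, ⟨h2, by rw [← h4, h5]⟩, h3⟩
    · rintro ⟨⟨h1, h5⟩, ⟨h2, h6⟩, h3⟩
      exact ⟨⟨⟨h1, h2, h3⟩, by rw [h5, h6]⟩, h5⟩
  -- degree as sum of fiber cards
  have hdeg : ∑ b ∈ K, (fib b).card = G.degree v := by
    rw [← SimpleGraph.card_neighborFinset_eq_degree]
    exact (card_eq_sum_card_fiberwise (fun u hu => mem_image_of_mem _ hu)).symm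
  have hfib_pos : ∀ b ∈ K, 1 ≤ (fib b).card := by
    intro b hb
    rw [hK, mem_image] at hb
    obtain ⟨u, hu, hcu⟩ := hb
    exact card_pos.mpr ⟨u, by simp [hfib, hu, hcu]⟩
  -- now the numeric inequality  ∑ m(m-1) ≤ S(S+1) with S = d - k
  have hkcard : K.card = colorDeg G c v := (colorDeg_eq G c v).symm
  set S := G.degree v - colorDeg G c v with hSdef
  have hS : ∑ b ∈ K, ((fib b).card - 1) = S := by
    have h1 : ∑ b ∈ K, ((fib b).card - 1) + K.card = G.degree v := by
      rw [← hdeg, card_eq_sum_ones K, ← sum_add_distrib]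
      exact sum_congr rfl fun b hb => Nat.sub_add_cancel (hfib_pos b hb)
    have hkd : colorDeg G c v ≤ G.degree v := by
      rw [← hkcard, ← SimpleGraph.card_neighborFinset_eq_degree]
      exact card_image_le
    omega
  have hterm : ∀ m : ℕ, 1 ≤ m → m * m - m = (m - 1) * (m - 1) + (m - 1) := by
    intro m hm
    obtain ⟨a, rfl⟩ := Nat.exists_eq_add_of_le hm
    simp only [Nat.add_sub_cancel_left]
    cases a with
    | zero => simp
    | succ a => ring_nf; omega
  calc (pairsE G c v).card
      = ∑ b ∈ K, ((fib b).card * (fib b).card - (fib b).card) := by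
        rw [hdecomp]
        exact sum_congr rfl fun b hb => by rw [hfiber_eq b hb, offDiag_card]
    _ = ∑ b ∈ K, (((fib b).card - 1) * ((fib b).card - 1) + ((fib b).card - 1)) :=
        sum_congr rfl fun b hb => hterm _ (hfib_pos b hb)
    _ = (∑ b ∈ K, ((fib b).card - 1) * ((fib b).card - 1)) + S := by
        rw [sum_add_distrib, hS]
    _ ≤ S * S + S := by
        have h2 : ∑ b ∈ K, ((fib b).card - 1) * ((fib b).card - 1) ≤ S * S := by
          calc ∑ b ∈ K, ((fib b).card - 1) * ((fib b).card - 1)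
              ≤ ∑ b ∈ K, ((fib b).card - 1) * S := by
                refine sum_le_sum fun b hb => Nat.mul_le_mul_left _ ?_
                rw [← hS]
                exact single_le_sum (f := fun b => (fib b).card - 1) (fun i _ => Nat.zero_le _) hb
            _ = S * S := by rw [← sum_mul, hS]
        omega
    _ = S * (S + 1) := by ring

lemma sum_b3_le : ∑ v, (b3 G c v).card ≤ ∑ v, (pairsE G c v).card := by
  classical
  rw [← card_sigma, ← card_sigma]
  apply card_le_card_of_injOn (fun t => ⟨t.2.1, (t.1, t.2.2)⟩)
  · rintro ⟨v, u, w⟩ ht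
    simp only [mem_coe, mem_sigma, mem_univ, true_and, b3, pairsD, mem_filter, mem_product,
      SimpleGraph.mem_neighborFinset] at ht
    obtain ⟨⟨⟨hvu, hvw⟩, hne⟩, hadj, hc⟩ := ht
    simp only [mem_coe, mem_sigma, mem_univ, true_and, pairsE, mem_filter, mem_offDiag,
      SimpleGraph.mem_neighborFinset]
    refine ⟨⟨hvu.symm, hadj, ?_⟩, ?_⟩
    · rintro rfl
      exact G.loopless.irrefl _ hvw
    · have h1 : s(v, u) = s(u, v) := Sym2.eq_swap
      rw [← h1]; exact hc.symm
  · rintro ⟨v, u, w⟩ _ ⟨v', u', w'⟩ _ h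
    simp only [Sigma.mk.inj_iff, Prod.mk.injEq, heq_eq_eq] at h
    obtain ⟨h1, h2, h3⟩ := h
    subst h1; subst h2; subst h3; rfl

lemma sum_b1_le :
    ∑ v, (b1 G c v).card ≤ ∑ v, G.degree v * (Fintype.card V - (G.degree v + 1)) := by
  classical
  have hcard : ∀ u : V, ((G.neighborFinset u) ×ˢ (univ \ insert u (G.neighborFinset u))).card
      = G.degree u * (Fintype.card V - (G.degree u + 1)) := by
    intro u
    rw [card_product, card_sdiff_of_subset (subset_univ _), card_insert_of_notMem (by simp), card_univ]
    rfl
  calc ∑ v, (b1 G c v).card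
      ≤ ∑ u, ((G.neighborFinset u) ×ˢ (univ \ insert u (G.neighborFinset u))).card := by
        rw [← card_sigma, ← card_sigma]
        apply card_le_card_of_injOn (fun t => ⟨t.2.1, (t.1, t.2.2)⟩)
        · rintro ⟨v, u, w⟩ ht
          simp only [mem_coe, mem_sigma, mem_univ, true_and, b1, pairsD, mem_filter, mem_product,
            SimpleGraph.mem_neighborFinset] at ht
          obtain ⟨⟨⟨hvu, hvw⟩, hne⟩, hnadj⟩ := ht
          simp only [mem_coe, mem_sigma, mem_univ, true_and, mem_product, mem_sdiff, mem_insert,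
            SimpleGraph.mem_neighborFinset]
          refine ⟨hvu.symm, ?_⟩
          rintro (rfl | hadj)
          · exact hne rfl
          · exact hnadj hadj
        · rintro ⟨v, u, w⟩ _ ⟨v', u', w'⟩ _ h
          simp only [Sigma.mk.inj_iff, Prod.mk.injEq, heq_eq_eq] at h
          obtain ⟨h1, h2, h3⟩ := h
          subst h1; subst h2; subst h3; rfl
    _ = ∑ u, G.degree u * (Fintype.card V - (G.degree u + 1)) := sum_congr rfl fun u _ => hcard u

lemma arith (n d k : ℕ) (hn : 13 ≤ n) (hk : n + 1 ≤ 2 * k) (hkd : k ≤ d) (hd : d + 1 ≤ n) :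
    7 + d + 3 * ((d - k) * (d - k + 1)) + d * (n - (d + 1)) ≤ d * d := by
  obtain ⟨x, hx⟩ := Nat.exists_eq_add_of_le hkd
  obtain ⟨m, hm⟩ := Nat.exists_eq_add_of_le hd
  subst hx hm
  have h1 : x + m + 2 ≤ k := by omega
  have h2 : 7 ≤ k := by omega
  have hsub : k + x - k = x := by omega
  have hsub2 : k + x + 1 + m - (k + x + 1) = m := by omega
  rw [hsub, hsub2]
  have h3 : (x + m + 2) * k ≤ k * k := Nat.mul_le_mul_right k h1
  have h4 : (x + m + 2) * x ≤ k * x := Nat.mul_le_mul_right x h1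
  nlinarith [h3, h4, h2]

lemma main_count (hn : 13 ≤ Fintype.card V)
    (hδ : ∀ v : V, Fintype.card V + 1 ≤ 2 * colorDeg G c v) :
    7 * Fintype.card V ≤ ∑ v, (rtp G c v).card := by
  classical
  set n := Fintype.card V with hn'
  have hdc : ∀ v, colorDeg G c v ≤ G.degree v := by
    intro v
    rw [colorDeg_eq, ← SimpleGraph.card_neighborFinset_eq_degree]
    exact card_image_le
  have hdn : ∀ v, G.degree v + 1 ≤ n := fun v => G.degree_lt_card_verts v
  have per : ∀ v : V, 7 + G.degree v + 3 * (pairsE G c v).card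
      + G.degree v * (n - (G.degree v + 1)) ≤ G.degree v * G.degree v := by
    intro v
    have h1 := pairsE_le G c v
    have h2 := arith n (G.degree v) (colorDeg G c v) hn (hδ v) (hdc v) (hdn v)
    omega
  have hA : 7 * n + (∑ v, G.degree v) + 3 * (∑ v, (pairsE G c v).card)
      + (∑ v, G.degree v * (n - (G.degree v + 1))) ≤ ∑ v, G.degree v * G.degree v := by
    calc 7 * n + (∑ v, G.degree v) + 3 * (∑ v, (pairsE G c v).card)
        + (∑ v, G.degree v * (n - (G.degree v + 1)))
        = ∑ v : V, (7 + G.degree v + 3 * (pairsE G c v).card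
            + G.degree v * (n - (G.degree v + 1))) := by
          rw [sum_add_distrib, sum_add_distrib, sum_add_distrib, sum_const, mul_sum, card_univ]
          simp [mul_comm, hn']
      _ ≤ ∑ v, G.degree v * G.degree v := sum_le_sum fun v _ => per v
  have hB : ∑ v, G.degree v * G.degree v
      ≤ (∑ v, G.degree v) + (∑ v, (pairsE G c v).card) + (∑ v, (pairsD G c v).card) := by
    rw [← sum_add_distrib, ← sum_add_distrib]
    exact sum_le_sum fun v _ => square_le G c v
  have hC : ∑ v, (pairsD G c v).card ≤ (∑ v, (rtp G c v).card) + (∑ v, (b1 G c v).card)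
      + (∑ v, (b3 G c v).card) + (∑ v, (b3' G c v).card) := by
    rw [← sum_add_distrib, ← sum_add_distrib, ← sum_add_distrib]
    exact sum_le_sum fun v _ => cover G c v
  have hD : ∑ v, (b3' G c v).card = ∑ v, (b3 G c v).card :=
    sum_congr rfl fun v _ => b3'_eq G c v
  have hE := sum_b3_le G c
  have hF := sum_b1_le G c
  rw [← hn'] at hF
  omega

lemma bookK4 (T : Finset V) (B : Finset (Finset V)) (hT : T ∈ B)
    (h3 : ∀ S ∈ B, S.card = 3) (h2 : ∀ S ∈ B, 2 ≤ (S ∩ T).card)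
    (hp : ∀ S ∈ B, ∀ S' ∈ B, S ≠ S' → (S ∩ S').card ≠ 1) :
    B.card ≤ (B.biUnion id).card := by
  classical
  set U := B.biUnion id with hU
  have hTU : T ⊆ U := fun x hx => mem_biUnion.mpr ⟨T, hT, hx⟩
  have hT3 : T.card = 3 := h3 T hT
  have hU3 : 3 ≤ U.card := hT3 ▸ card_le_card hTU
  have hSU : ∀ S ∈ B, S ⊆ U := fun S hS x hx => mem_biUnion.mpr ⟨S, hS, hx⟩
  -- facts about S ∈ B.erase T
  have key : ∀ S ∈ B.erase T, (S ∩ T).card = 2 ∧ (S \ T).card = 1 := by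
    intro S hS
    obtain ⟨hne, hSB⟩ := mem_erase.mp hS
    have hc3 : S.card = 3 := h3 S hSB
    have hint : (S ∩ T).card = 2 := by
      have hle : (S ∩ T).card ≤ 3 := by
        calc (S ∩ T).card ≤ S.card := card_le_card (inter_subset_left)
          _ = 3 := hc3
      rcases Nat.lt_or_ge (S ∩ T).card 3 with h | h
      · have := h2 S hSB; omega
      · exfalso
        have hST : S ∩ T = S := eq_of_subset_of_card_le inter_subset_left (by omega)
        have hsub : S ⊆ T := by rw [← hST]; exact inter_subset_right
        exact hne (eq_of_subset_of_card_le hsub (by omega))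
    have := card_inter_add_card_sdiff S T
    exact ⟨hint, by omega⟩
  -- rigidity: distinct members of erase with different extras share the same base
  have rigid : ∀ S ∈ B.erase T, ∀ S' ∈ B.erase T, S ≠ S' → S \ T ≠ S' \ T →
      S ∩ T = S' ∩ T := by
    intro S hS S' hS' hne hext
    obtain ⟨h2S, h1S⟩ := key S hS
    obtain ⟨h2S', h1S'⟩ := key S' hS'
    obtain ⟨x, hx⟩ := card_eq_one.mp h1S
    obtain ⟨y, hy⟩ := card_eq_one.mp h1S'
    have hxy : x ≠ y := fun h => hext (by rw [hx, hy, h])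
    have hSS' : S ∩ S' = (S ∩ T) ∩ (S' ∩ T) := by
      ext z
      simp only [mem_inter]
      constructor
      · rintro ⟨hzS, hzS'⟩
        by_cases hzT : z ∈ T
        · exact ⟨⟨hzS, hzT⟩, hzS', hzT⟩
        · exfalso
          have hz1 : z ∈ S \ T := mem_sdiff.mpr ⟨hzS, hzT⟩
          have hz2 : z ∈ S' \ T := mem_sdiff.mpr ⟨hzS', hzT⟩
          rw [hx, mem_singleton] at hz1
          rw [hy, mem_singleton] at hz2
          exact hxy (hz1 ▸ hz2 ▸ rfl)
      · rintro ⟨⟨h1, _⟩, h2, _⟩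
        exact ⟨h1, h2⟩
    -- the two bases are 2-subsets of the 3-set T, intersecting in ≥ 1
    have hge1 : 1 ≤ ((S ∩ T) ∩ (S' ∩ T)).card := by
      have hsubU : (S ∩ T) ∪ (S' ∩ T) ⊆ T := union_subset inter_subset_right inter_subset_right
      have := card_union_add_card_inter (S ∩ T) (S' ∩ T)
      have hle : ((S ∩ T) ∪ (S' ∩ T)).card ≤ 3 := hT3 ▸ card_le_card hsubU
      omega
    have hne1 : (S ∩ S').card ≠ 1 := hp S (mem_of_mem_erase hS) S' (mem_of_mem_erase hS') hne
    rw [hSS'] at hne1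
    have hge2 : 2 ≤ ((S ∩ T) ∩ (S' ∩ T)).card := by omega
    have hsub1 : (S ∩ T) ∩ (S' ∩ T) ⊆ S ∩ T := inter_subset_left
    have heq1 : (S ∩ T) ∩ (S' ∩ T) = S ∩ T :=
      eq_of_subset_of_card_le hsub1 (by omega)
    have hsub2 : S ∩ T ⊆ S' ∩ T := by rw [← heq1]; exact inter_subset_right
    exact eq_of_subset_of_card_le hsub2 (by omega)
  have hrw : ∀ S : Finset V, (S ∩ T) ∪ (S \ T) = S := fun S => sup_inf_sdiff S T
  have hcardB : B.card = (B.erase T).card + 1 := (card_erase_add_one hT).symm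
  by_cases hcase : ∀ S ∈ B.erase T, ∀ S' ∈ B.erase T, S \ T = S' \ T
  · -- book case: all extras equal
    have hinj : ∀ S ∈ B.erase T, ∀ S' ∈ B.erase T, S ∩ T = S' ∩ T → S = S' := by
      intro S hS S' hS' h
      rw [← hrw S, ← hrw S', h, hcase S hS S' hS']
    have hle3 : (B.erase T).card ≤ 3 := by
      have : (B.erase T).card ≤ (T.powersetCard 2).card := by
        apply card_le_card_of_injOn (fun S => S ∩ T)
        · intro S hS
          exact mem_powersetCard.mpr ⟨inter_subset_right, (key S hS).1⟩
        · intro S hS S' hS' h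
          exact hinj S hS S' hS' h
      rwa [card_powersetCard, hT3] at this
    rcases (B.erase T).eq_empty_or_nonempty with hemp | ⟨S0, hS0⟩
    · rw [hcardB, hemp]
      simp only [card_empty]
      omega
    · obtain ⟨x, hx⟩ := card_eq_one.mp (key S0 hS0).2
      have hxU : x ∈ U := hSU S0 (mem_of_mem_erase hS0) (by
        have : x ∈ S0 \ T := hx ▸ mem_singleton_self x
        exact (mem_sdiff.mp this).1)
      have hxT : x ∉ T := by
        have : x ∈ S0 \ T := hx ▸ mem_singleton_self x
        exact (mem_sdiff.mp this).2
      have h4 : 4 ≤ U.card := by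
        have : insert x T ⊆ U := insert_subset hxU hTU
        have := card_le_card this
        rwa [card_insert_of_notMem hxT, hT3] at this
      -- |B| ≤ 4 ≤ |U|, but need erase ≤ 3: already
      omega
  · -- K4-ish case: two different extras exist, extras map is injective
    push_neg at hcase
    obtain ⟨S1, hS1, S2, hS2, hext12⟩ := hcase
    have hinj : ∀ S ∈ B.erase T, ∀ S' ∈ B.erase T, S \ T = S' \ T → S = S' := by
      intro S hS S' hS' h
      by_contra hne
      -- find witness with different extra
      have hwit : ∃ W ∈ B.erase T, W \ T ≠ S \ T := by
        by_cases h1 : S1 \ T = S \ T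
        · exact ⟨S2, hS2, fun h2 => hext12 (h1 ▸ h2 ▸ rfl)⟩
        · exact ⟨S1, hS1, h1⟩
      obtain ⟨W, hW, hWext⟩ := hwit
      have hWne : W ≠ S := fun h => hWext (h ▸ rfl)
      have hWne' : W ≠ S' := fun hh => hWext (by rw [hh, h])
      have e1 : S ∩ T = W ∩ T := rigid S hS W hW hWne.symm (fun hh => hWext hh.symm)
      have e2 : S' ∩ T = W ∩ T := rigid S' hS' W hW hWne'.symm (fun hh => hWext (hh.symm.trans h.symm))
      exact hne (by rw [← hrw S, ← hrw S', h, e1, e2])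
    have hle : (B.erase T).card ≤ ((U \ T).powersetCard 1).card := by
      apply card_le_card_of_injOn (fun S => S \ T)
      · intro S hS
        refine mem_powersetCard.mpr ⟨?_, (key S hS).2⟩
        exact sdiff_subset_sdiff (hSU S (mem_of_mem_erase hS)) (le_refl T)
      · intro S hS S' hS' h
        exact hinj S hS S' hS' h
    rw [card_powersetCard, Nat.choose_one_right, card_sdiff_of_subset hTU, hT3] at hle
    omega

lemma structure_lemma (F : Finset (Finset V)) (h3 : ∀ S ∈ F, S.card = 3)
    (hp : ∀ S ∈ F, ∀ S' ∈ F, S ≠ S' → (S ∩ S').card ≠ 1) :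
    F.card ≤ (F.biUnion id).card := by
  classical
  induction F using Finset.strongInduction with
  | _ F ih =>
    rcases F.eq_empty_or_nonempty with rfl | ⟨T, hT⟩
    · simp
    · set B := F.filter (fun S => 2 ≤ (S ∩ T).card) with hB
      have hBsub : B ⊆ F := filter_subset _ _
      have hTB : T ∈ B := mem_filter.mpr ⟨hT, by rw [inter_self, h3 T hT]; omega⟩
      set F' := F \ B with hF'
      have hF'sub : F' ⊆ F := sdiff_subset
      have hF'ss : F' ⊂ F := by
        refine ssubset_iff_of_subset hF'sub |>.mpr ⟨T, hT, ?_⟩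
        simp [hF', hTB]
      have hIH : F'.card ≤ (F'.biUnion id).card :=
        ih F' hF'ss (fun S hS => h3 S (hF'sub hS))
          (fun S hS S' hS' => hp S (hF'sub hS) S' (hF'sub hS'))
      -- disjointness between F' members and B members
      have hdisj : ∀ S ∈ F', ∀ P ∈ B, Disjoint S P := by
        intro S hS P hP
        have hSF : S ∈ F := hF'sub hS
        have hSnB : S ∉ B := (mem_sdiff.mp hS).2
        have hST0 : S ∩ T = ∅ := by
          have hlt : (S ∩ T).card < 2 := by
            by_contra hab
            exact hSnB (mem_filter.mpr ⟨hSF, by omega⟩)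
          have hSneT : S ≠ T := fun h => hSnB (h ▸ hTB)
          have := hp S hSF T hT hSneT
          rw [← card_eq_zero]
          omega
        have hPF : P ∈ F := hBsub hP
        by_cases hPT : P = T
        · subst hPT
          exact disjoint_iff_inter_eq_empty.mpr hST0
        · have hSneP : S ≠ P := fun h => hSnB (h ▸ hP)
          have hsub : S ∩ P ⊆ P \ T := by
            intro z hz
            obtain ⟨hzS, hzP⟩ := mem_inter.mp hz
            refine mem_sdiff.mpr ⟨hzP, fun hzT => ?_⟩
            have : z ∈ S ∩ T := mem_inter.mpr ⟨hzS, hzT⟩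
            rw [hST0] at this
            exact notMem_empty z this
          have hP3 : P.card = 3 := h3 P hPF
          have hPT2 : 2 ≤ (P ∩ T).card := (mem_filter.mp hP).2
          have hPsd : (P \ T).card ≤ 1 := by
            have := card_inter_add_card_sdiff P T
            have hle : (P ∩ T).card ≤ 3 := by
              calc (P ∩ T).card ≤ P.card := card_le_card inter_subset_left
                _ = 3 := hP3
            omega
          have hSP1 : (S ∩ P).card ≤ 1 := le_trans (card_le_card hsub) hPsd
          have := hp S hSF P hPF hSneP
          rw [disjoint_iff_inter_eq_empty, ← card_eq_zero]
          omega
      have hdisjU : Disjoint (B.biUnion id) (F'.biUnion id) := by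
        rw [disjoint_biUnion_left]
        intro P hP
        rw [disjoint_biUnion_right]
        intro S hS
        exact (hdisj S hS P hP).symm
      have hsplit : F.biUnion id = B.biUnion id ∪ F'.biUnion id := by
        ext x
        simp only [mem_biUnion, mem_union, hF', mem_sdiff, id]
        constructor
        · rintro ⟨S, hS, hx⟩
          by_cases h : S ∈ B
          · exact Or.inl ⟨S, h, hx⟩
          · exact Or.inr ⟨S, ⟨hS, h⟩, hx⟩
        · rintro (⟨S, hS, hx⟩ | ⟨S, hS, hx⟩)
          · exact ⟨S, hBsub hS, hx⟩
          · exact ⟨S, hS.1, hx⟩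
      have hBcard : B.card ≤ (B.biUnion id).card := by
        apply bookK4 T B hTB
        · intro S hS; exact h3 S (hBsub hS)
        · intro S hS; exact (mem_filter.mp hS).2
        · intro S hS S' hS'; exact hp S (hBsub hS) S' (hBsub hS')
      have hcards : F'.card + B.card = F.card := card_sdiff_add_card_eq_card hBsub
      have : (F.biUnion id).card = (B.biUnion id).card + (F'.biUnion id).card := by
        rw [hsplit, card_union_of_disjoint hdisjU]
      omega

lemma irt_ne {u v w : V} (h : IsRainbowTri G c u v w) : u ≠ v ∧ u ≠ w ∧ v ≠ w :=
  ⟨h.1.ne, h.2.1.ne, h.2.2.1.ne⟩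

lemma irt_swap12 {u v w : V} (h : IsRainbowTri G c u v w) : IsRainbowTri G c v u w := by
  obtain ⟨a1, a2, a3, c1, c2, c3⟩ := h
  have hs : s(v, u) = s(u, v) := Sym2.eq_swap
  exact ⟨a1.symm, a3, a2, by rw [hs]; exact c2, by rw [hs]; exact c1, c3.symm⟩

lemma irt_swap23 {u v w : V} (h : IsRainbowTri G c u v w) : IsRainbowTri G c u w v := by
  obtain ⟨a1, a2, a3, c1, c2, c3⟩ := h
  have hs : s(w, v) = s(v, w) := Sym2.eq_swap
  exact ⟨a2, a1, a3.symm, c1.symm, by rw [hs]; exact c3, by rw [hs]; exact c2⟩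

lemma extract {v u w a : V} (h : IsRainbowTri G c v u w) (ha : a ∈ ({v, u, w} : Finset V)) :
    ∃ x y, ({v, u, w} : Finset V) = {a, x, y} ∧ IsRainbowTri G c a x y := by
  simp only [mem_insert, mem_singleton] at ha
  rcases ha with rfl | rfl | rfl
  · exact ⟨u, w, rfl, h⟩
  · refine ⟨v, w, ?_, irt_swap12 G c h⟩
    ext z; simp only [mem_insert, mem_singleton]; tauto
  · refine ⟨v, u, ?_, irt_swap12 G c (irt_swap23 G c h)⟩
    ext z; simp only [mem_insert, mem_singleton]; tauto

lemma card_three {v u w : V} (h : IsRainbowTri G c v u w) :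
    ({v, u, w} : Finset V).card = 3 := by
  obtain ⟨h1, h2, h3⟩ := irt_ne G c h
  rw [card_insert_of_notMem (by simp [h1, h2]), card_insert_of_notMem (by simp [h3]),
    card_singleton]

lemma sigma_le_six :
    (univ.sigma (rtp G c)).card
      ≤ 6 * ((univ.sigma (rtp G c)).image
          (fun t => ({t.1, t.2.1, t.2.2} : Finset V))).card := by
  classical
  set f : (Σ _ : V, V × V) → Finset V := fun t => {t.1, t.2.1, t.2.2} with hf
  set O := univ.sigma (rtp G c) with hO
  set F := O.image f with hF
  have hmem : ∀ t ∈ O, f t ∈ F := fun t ht => mem_image_of_mem f ht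
  rw [card_eq_sum_card_fiberwise hmem]
  have hfib : ∀ S ∈ F, (O.filter fun t => f t = S).card ≤ 6 := by
    intro S hS
    obtain ⟨t0, ht0, hft0⟩ := mem_image.mp hS
    have hrt0 : IsRainbowTri G c t0.1 t0.2.1 t0.2.2 :=
      (rtp_iff G c t0.1 t0.2).mp (mem_sigma.mp ht0).2
    have hS3 : S.card = 3 := hft0 ▸ card_three G c hrt0
    have hinj : (O.filter fun t => f t = S).card ≤ S.offDiag.card := by
      apply card_le_card_of_injOn (fun t => (t.1, t.2.1))
      · intro t ht
        obtain ⟨htO, htS⟩ := mem_filter.mp ht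
        have hrt : IsRainbowTri G c t.1 t.2.1 t.2.2 :=
          (rtp_iff G c t.1 t.2).mp (mem_sigma.mp htO).2
        obtain ⟨n1, n2, n3⟩ := irt_ne G c hrt
        rw [mem_coe, mem_offDiag]
        refine ⟨?_, ?_, n1⟩
        · rw [← htS]; simp [hf]
        · rw [← htS]; simp [hf]
      · rintro ⟨a, b, d⟩ ht ⟨a', b', d'⟩ ht' heq
        simp only [Prod.mk.injEq] at heq
        obtain ⟨rfl, rfl⟩ := heq
        obtain ⟨htO, htS⟩ := mem_filter.mp ht
        obtain ⟨htO', htS'⟩ := mem_filter.mp ht'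
        have hrt : IsRainbowTri G c a b d := (rtp_iff G c a (b, d)).mp (mem_sigma.mp htO).2
        have hrt' : IsRainbowTri G c a b d' := (rtp_iff G c a (b, d')).mp (mem_sigma.mp htO').2
        obtain ⟨n1, n2, n3⟩ := irt_ne G c hrt
        obtain ⟨_, n2', n3'⟩ := irt_ne G c hrt'
        have hd : d = d' := by
          have hdm : d ∈ (S.erase a).erase b := by
            rw [mem_erase, mem_erase]
            refine ⟨n3.symm, n2.symm, ?_⟩
            rw [← htS]; simp [hf]
          have hdm' : d' ∈ (S.erase a).erase b := by
            rw [mem_erase, mem_erase]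
            refine ⟨n3'.symm, n2'.symm, ?_⟩
            rw [← htS']; simp [hf]
          have hcard : ((S.erase a).erase b).card ≤ 1 := by
            have haS : a ∈ S := by rw [← htS]; simp [hf]
            have hbS : b ∈ (S.erase a) := by
              rw [mem_erase]
              exact ⟨n1.symm, by rw [← htS]; simp [hf]⟩
            rw [card_erase_of_mem hbS, card_erase_of_mem haS, hS3]
          exact card_le_one.mp hcard d hdm d' hdm'
        subst hd
        rfl
    have : S.offDiag.card = 6 := by rw [offDiag_card, hS3]
    omega
  calc ∑ S ∈ F, (O.filter fun t => f t = S).card ≤ ∑ S ∈ F, 6 := sum_le_sum hfib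
    _ = 6 * F.card := by rw [sum_const, smul_eq_mul, mul_comm]

end RainbowAux

/-- If `n ≥ 13` and `δ^c(G) ≥ (n+1)/2` then `G` contains two rainbow triangles
sharing exactly one common vertex. -/
theorem statement2 {V : Type*} [Fintype V] (G : SimpleGraph V) (c : Sym2 V → ℕ)
    (hn : 13 ≤ Fintype.card V)
    (hδ : ∀ v : V, Fintype.card V + 1 ≤ 2 * colorDeg G c v) :
    ∃ v x₁ y₁ x₂ y₂ : V,
      x₁ ≠ y₁ ∧ x₁ ≠ x₂ ∧ x₁ ≠ y₂ ∧ y₁ ≠ x₂ ∧ y₁ ≠ y₂ ∧ x₂ ≠ y₂ ∧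
      IsRainbowTri G c v x₁ y₁ ∧ IsRainbowTri G c v x₂ y₂ := by
  letI : DecidableEq V := Classical.decEq V
  letI : DecidableRel G.Adj := fun a b => Classical.propDecidable _
  by_contra hcon
  push_neg at hcon
  set n := Fintype.card V with hn'
  have hcount : 7 * n ≤ ∑ v, (RainbowAux.rtp G c v).card := RainbowAux.main_count G c hn hδ
  set O := univ.sigma (RainbowAux.rtp G c) with hO
  have hOcard : O.card = ∑ v, (RainbowAux.rtp G c v).card := card_sigma _ _
  set f : (Σ _ : V, V × V) → Finset V := fun t => {t.1, t.2.1, t.2.2} with hf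
  set F := O.image f with hF
  have h3F : ∀ S ∈ F, S.card = 3 := by
    intro S hS
    obtain ⟨t, ht, rfl⟩ := mem_image.mp hS
    exact RainbowAux.card_three G c ((RainbowAux.rtp_iff G c t.1 t.2).mp (mem_sigma.mp ht).2)
  have hpF : ∀ S ∈ F, ∀ S' ∈ F, S ≠ S' → (S ∩ S').card ≠ 1 := by
    intro S hS S' hS' hne hcard1
    obtain ⟨t, ht, rfl⟩ := mem_image.mp hS
    obtain ⟨t', ht', rfl⟩ := mem_image.mp hS'
    have hrt : IsRainbowTri G c t.1 t.2.1 t.2.2 :=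
      (RainbowAux.rtp_iff G c t.1 t.2).mp (mem_sigma.mp ht).2
    have hrt' : IsRainbowTri G c t'.1 t'.2.1 t'.2.2 :=
      (RainbowAux.rtp_iff G c t'.1 t'.2).mp (mem_sigma.mp ht').2
    obtain ⟨a, ha⟩ := card_eq_one.mp hcard1
    have haS : a ∈ f t := by
      have : a ∈ f t ∩ f t' := ha ▸ mem_singleton_self a
      exact (mem_inter.mp this).1
    have haS' : a ∈ f t' := by
      have : a ∈ f t ∩ f t' := ha ▸ mem_singleton_self a
      exact (mem_inter.mp this).2
    obtain ⟨x₁, y₁, hfeq, hT1⟩ := RainbowAux.extract G c hrt haS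
    obtain ⟨x₂, y₂, hfeq', hT2⟩ := RainbowAux.extract G c hrt' haS'
    have hx1 : x₁ ∈ f t := by show x₁ ∈ ({t.1, t.2.1, t.2.2} : Finset V); rw [hfeq]; simp
    have hy1 : y₁ ∈ f t := by show y₁ ∈ ({t.1, t.2.1, t.2.2} : Finset V); rw [hfeq]; simp
    have hx2 : x₂ ∈ f t' := by show x₂ ∈ ({t'.1, t'.2.1, t'.2.2} : Finset V); rw [hfeq']; simp
    have hy2 : y₂ ∈ f t' := by show y₂ ∈ ({t'.1, t'.2.1, t'.2.2} : Finset V); rw [hfeq']; simp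
    obtain ⟨hax1, hay1, hx1y1⟩ := RainbowAux.irt_ne G c hT1
    obtain ⟨hax2, hay2, hx2y2⟩ := RainbowAux.irt_ne G c hT2
    have hx1n : x₁ ∉ f t' := by
      intro hmem
      have : x₁ ∈ f t ∩ f t' := mem_inter.mpr ⟨hx1, hmem⟩
      rw [ha, mem_singleton] at this
      exact hax1 this.symm
    have hy1n : y₁ ∉ f t' := by
      intro hmem
      have : y₁ ∈ f t ∩ f t' := mem_inter.mpr ⟨hy1, hmem⟩
      rw [ha, mem_singleton] at this
      exact hay1 this.symm
    exact hcon a x₁ y₁ x₂ y₂ hx1y1 (fun h => hx1n (h ▸ hx2)) (fun h => hx1n (h ▸ hy2))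
      (fun h => hy1n (h ▸ hx2)) (fun h => hy1n (h ▸ hy2)) hx2y2 hT1 hT2
  have hstruct : F.card ≤ n := by
    calc F.card ≤ (F.biUnion id).card := RainbowAux.structure_lemma F h3F hpF
      _ ≤ (univ : Finset V).card := card_le_card (subset_univ _)
      _ = n := card_univ
  have hsix : O.card ≤ 6 * F.card := RainbowAux.sigma_le_six G c
  omega
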